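/- arXiv:2004.04331 — 5 statements merged into one kernel-verified Lean document; each statement's English description precedes it below -/
import Mathlib

section
/- Let Yᵀ = Σ_{l=1}^{K} X_lᵀ U G_l Vᴴ + Zᵀ, where the pilot matrices X_l ∈ ℂ^{M_k×T} satisfy X_k X_lᴴ = 0 for all l ≠ k, U ∈ ℂ^{M_k×N_k}, V ∈ ℂ^{M_t×N_t} are deterministic, each G_l is a random N_k×N_t complex matrix, and Z is a random T×M_t noise matrix. Assume the entries of G_k are pairwise uncorrelated with power matrix Ω_k, the entries of Zᵀ are pairwise uncorrelated with second-moment matrix N = E[Zᵀ ⊙ conj(Zᵀ)], and all cross second moments between entries of G_k and entries of Z vanish. Then E[(Uᴴ X_k^* Yᵀ V) ⊙ conj(Uᴴ X_k^* Yᵀ V)] = T_kr Ω_k T_t + O_kr N O_t, where T_kr = (Uᴴ X_k^* X_kᵀ U) ⊙ conj(Uᴴ X_k^* X_kᵀ U), T_t = (Vᴴ V) ⊙ conj(Vᴴ V), O_kr = (Uᴴ X_k^*) ⊙ conj(Uᴴ X_k^*), and O_t = V ⊙ conj(V). -/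
open Matrix MeasureTheory
open scoped Matrix

private lemma memLp_conj_aux {α : Type*} [MeasurableSpace α] {μ : Measure α} {f : α → ℂ}
    (hf : MemLp f 2 μ) : MemLp (fun ω => (starRingEnd ℂ) (f ω)) 2 μ := by
  refine ⟨Continuous.comp_aestronglyMeasurable continuous_star hf.1, ?_⟩
  have h : eLpNorm (fun ω => (starRingEnd ℂ) (f ω)) 2 μ = eLpNorm f 2 μ :=
    eLpNorm_congr_norm_ae (Filter.Eventually.of_forall fun ω => by simp)
  rw [h]
  exact hf.2

private lemma integrable_mul_L2 {α : Type*} [MeasurableSpace α] {μ : Measure α} {f g : α → ℂ}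
    (hf : MemLp f 2 μ) (hg : MemLp g 2 μ) : Integrable (fun ω => f ω * g ω) μ := by
  have h : MemLp (f • g) 1 μ := hg.smul hf (hpqr := ⟨by rw [inv_one, ENNReal.inv_two_add_inv_two]⟩)
  have h' : Integrable (f • g) μ := memLp_one_iff_integrable.mp h
  exact h'

private lemma expand_sum_L2 {α ι : Type*} [MeasurableSpace α] [Fintype ι] {μ : Measure α}
    (c : ι → ℂ) (f : ι → α → ℂ) (hf : ∀ u, MemLp (f u) 2 μ) :
    ∫ ω, (∑ u, c u * f u ω) * (starRingEnd ℂ) (∑ v, c v * f v ω) ∂μ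
      = ∑ u, ∑ v, (c u * (starRingEnd ℂ) (c v)) *
          ∫ ω, f u ω * (starRingEnd ℂ) (f v ω) ∂μ := by
  have hint : ∀ u v, Integrable (fun ω => f u ω * (starRingEnd ℂ) (f v ω)) μ :=
    fun u v => integrable_mul_L2 (hf u) (memLp_conj_aux (hf v))
  have h1 : ∀ ω, (∑ u, c u * f u ω) * (starRingEnd ℂ) (∑ v, c v * f v ω)
      = ∑ u, ∑ v, (c u * (starRingEnd ℂ) (c v)) * (f u ω * (starRingEnd ℂ) (f v ω)) := by
    intro ω
    rw [map_sum, Finset.sum_mul_sum]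
    refine Finset.sum_congr rfl fun u _ => Finset.sum_congr rfl fun v _ => ?_
    rw [_root_.map_mul]; ring
  simp_rw [h1]
  rw [integral_finset_sum _
    (fun u _ => integrable_finset_sum _ (fun v _ => ((hint u v).const_mul _)))]
  refine Finset.sum_congr rfl fun u _ => ?_
  rw [integral_finset_sum _ (fun v _ => (hint u v).const_mul _)]
  exact Finset.sum_congr rfl fun v _ => integral_const_mul _ _

/-- Second-moment identity for the received pilot signal:
`E[(Uᴴ Xₖ^* Yᵀ V) ⊙ (Uᴴ Xₖ^* Yᵀ V)^*] = T_kr Ω_k T_t + O_kr N O_t`,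
where `Yᵀ = ∑_l Xₗᵀ U Gₗ Vᴴ + Zᵀ`, the pilots of distinct users are orthogonal, the entries of
`G_k` are pairwise uncorrelated with power matrix `Ω_k`, the entries of `Zᵀ` are pairwise
uncorrelated with second-moment matrix `N = E[Zᵀ ⊙ (Zᵀ)^*]`, and all cross second moments
between entries of `G_k` and entries of `Z` vanish.  Here `Zt` stands for `Zᵀ`. -/
theorem stmt1 {α : Type*} [MeasurableSpace α] (μ : Measure α) [IsProbabilityMeasure μ]
    {K T Mk Mt Nk Nt : ℕ}
    (X : Fin K → Matrix (Fin Mk) (Fin T) ℂ)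
    (U : Matrix (Fin Mk) (Fin Nk) ℂ) (V : Matrix (Fin Mt) (Fin Nt) ℂ)
    (G : Fin K → α → Matrix (Fin Nk) (Fin Nt) ℂ)
    (Zt : α → Matrix (Fin T) (Fin Mt) ℂ)
    (Yt : α → Matrix (Fin T) (Fin Mt) ℂ)
    (hY : ∀ ω, Yt ω = (∑ l, (X l)ᵀ * U * G l ω * Vᴴ) + Zt ω)
    (k : Fin K)
    (horth : ∀ l, l ≠ k → X k * (X l)ᴴ = 0)
    (hGL2 : ∀ l a b, MemLp (fun ω => G l ω a b) 2 μ)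
    (hZL2 : ∀ i j, MemLp (fun ω => Zt ω i j) 2 μ)
    (Omk : Matrix (Fin Nk) (Fin Nt) ℝ)
    (hG : ∀ s₁ s₂ t₁ t₂, (∫ ω, G k ω s₁ s₂ * (starRingEnd ℂ) (G k ω t₁ t₂) ∂μ)
      = if s₁ = t₁ ∧ s₂ = t₂ then (Omk s₁ s₂ : ℂ) else 0)
    (hZuncorr : ∀ i j i' j', (i, j) ≠ (i', j') →
      (∫ ω, Zt ω i j * (starRingEnd ℂ) (Zt ω i' j') ∂μ) = 0)
    (hcross : ∀ a b i j,
      (∫ ω, G k ω a b * (starRingEnd ℂ) (Zt ω i j) ∂μ) = 0 ∧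
      (∫ ω, G k ω a b * Zt ω i j ∂μ) = 0) :
    (Matrix.of fun s t =>
        ∫ ω, (Uᴴ * (X k).map (starRingEnd ℂ) * Yt ω * V) s t
          * (starRingEnd ℂ) ((Uᴴ * (X k).map (starRingEnd ℂ) * Yt ω * V) s t) ∂μ)
      = ((Uᴴ * (X k).map (starRingEnd ℂ) * (X k)ᵀ * U)
            ⊙ (Uᴴ * (X k).map (starRingEnd ℂ) * (X k)ᵀ * U).map (starRingEnd ℂ))
          * Omk.map (fun x => (x : ℂ))
          * ((Vᴴ * V) ⊙ (Vᴴ * V).map (starRingEnd ℂ))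
        + ((Uᴴ * (X k).map (starRingEnd ℂ)) ⊙ (Uᴴ * (X k).map (starRingEnd ℂ)).map (starRingEnd ℂ))
          * (Matrix.of fun i j => ∫ ω, Zt ω i j * (starRingEnd ℂ) (Zt ω i j) ∂μ)
          * (V ⊙ V.map (starRingEnd ℂ)) := by
  classical
  set A : Matrix (Fin Nk) (Fin T) ℂ := Uᴴ * (X k).map (starRingEnd ℂ) with hAdef
  set B : Matrix (Fin Nk) (Fin Nk) ℂ := A * (X k)ᵀ * U with hBdef
  set C : Matrix (Fin Nt) (Fin Nt) ℂ := Vᴴ * V with hCdef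
  -- orthogonality entails `(X k).map conj * (X l)ᵀ = 0` for `l ≠ k`
  have hXl : ∀ l, l ≠ k → (X k).map (starRingEnd ℂ) * (X l)ᵀ = 0 := by
    intro l hl
    have h0 : (X k * (X l)ᴴ).map (starRingEnd ℂ) = (0 : Matrix (Fin Mk) (Fin Mk) ℂ) := by
      rw [horth l hl]
      ext i j; simp [Matrix.map_apply]
    have h1 : (X k * (X l)ᴴ).map (starRingEnd ℂ)
        = (X k).map (starRingEnd ℂ) * ((X l)ᴴ).map (starRingEnd ℂ) := Matrix.map_mul
    have h2 : ((X l)ᴴ).map (starRingEnd ℂ) = (X l)ᵀ := by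
      ext i j; simp [Matrix.map_apply, Matrix.conjTranspose_apply]
    rw [h1, h2] at h0
    exact h0
  -- key decomposition of the processed signal
  have hkey : ∀ ω, A * Yt ω * V = B * G k ω * C + A * Zt ω * V := by
    intro ω
    rw [hY ω, Matrix.mul_add, Matrix.add_mul, Matrix.mul_sum]
    congr 1
    rw [Matrix.sum_mul, Finset.sum_eq_single k]
    · rw [hBdef, hCdef]
      simp only [Matrix.mul_assoc]
    · intro l _ hl
      have hz : A * ((X l)ᵀ * U * G l ω * Vᴴ) = 0 := by
        have hassoc : (X l)ᵀ * U * G l ω * Vᴴ = (X l)ᵀ * (U * G l ω * Vᴴ) := by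
          simp only [Matrix.mul_assoc]
        rw [hAdef, hassoc, Matrix.mul_assoc Uᴴ, ← Matrix.mul_assoc ((X k).map (starRingEnd ℂ)),
          hXl l hl, Matrix.zero_mul, Matrix.mul_zero]
      rw [hz, Matrix.zero_mul]
    · intro h; exact absurd (Finset.mem_univ k) h
  -- entrywise computation
  ext s t
  simp only [Matrix.of_apply, Matrix.add_apply]
  -- coefficient and random families indexed by a sum type
  set c : (Fin Nk × Fin Nt) ⊕ (Fin T × Fin Mt) → ℂ :=
    Sum.elim (fun p => B s p.1 * C p.2 t) (fun q => A s q.1 * V q.2 t) with hcdef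
  set f : (Fin Nk × Fin Nt) ⊕ (Fin T × Fin Mt) → α → ℂ :=
    Sum.elim (fun p ω => G k ω p.1 p.2) (fun q ω => Zt ω q.1 q.2) with hfdef
  have hmem : ∀ u, MemLp (f u) 2 μ := by
    rintro (p | q)
    · exact hGL2 k p.1 p.2
    · exact hZL2 q.1 q.2
  have hrepr : ∀ ω, (A * Yt ω * V) s t = ∑ u, c u * f u ω := by
    intro ω
    rw [hkey ω, Fintype.sum_sum_type]
    simp only [hcdef, hfdef, Sum.elim_inl, Sum.elim_inr, Matrix.add_apply]
    congr 1
    · rw [Fintype.sum_prod_type]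
      simp only [Matrix.mul_apply, Finset.sum_mul]
      rw [Finset.sum_comm]
      exact Finset.sum_congr rfl fun a _ => Finset.sum_congr rfl fun b _ => by ring
    · rw [Fintype.sum_prod_type]
      simp only [Matrix.mul_apply, Finset.sum_mul]
      rw [Finset.sum_comm]
      exact Finset.sum_congr rfl fun i _ => Finset.sum_congr rfl fun j _ => by ring
  -- the four blocks of second moments
  have hGG : ∀ (p p' : Fin Nk × Fin Nt),
      (∫ ω, G k ω p.1 p.2 * (starRingEnd ℂ) (G k ω p'.1 p'.2) ∂μ)
        = if p = p' then (Omk p.1 p.2 : ℂ) else 0 := by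
    intro p p'
    by_cases h : p = p'
    · subst h; rw [hG]; simp
    · rw [hG, if_neg (fun hc => h (Prod.ext hc.1 hc.2)), if_neg h]
  have hGZ : ∀ (p : Fin Nk × Fin Nt) (q : Fin T × Fin Mt),
      (∫ ω, G k ω p.1 p.2 * (starRingEnd ℂ) (Zt ω q.1 q.2) ∂μ) = 0 :=
    fun p q => (hcross p.1 p.2 q.1 q.2).1
  have hZG : ∀ (q : Fin T × Fin Mt) (p : Fin Nk × Fin Nt),
      (∫ ω, Zt ω q.1 q.2 * (starRingEnd ℂ) (G k ω p.1 p.2) ∂μ) = 0 := by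
    intro q p
    have h := (hcross p.1 p.2 q.1 q.2).1
    have h2 : ∫ ω, (starRingEnd ℂ) (G k ω p.1 p.2 * (starRingEnd ℂ) (Zt ω q.1 q.2)) ∂μ = 0 := by
      rw [integral_conj, h, map_zero]
    simpa [_root_.map_mul, mul_comm] using h2
  have hZZ : ∀ (q q' : Fin T × Fin Mt),
      (∫ ω, Zt ω q.1 q.2 * (starRingEnd ℂ) (Zt ω q'.1 q'.2) ∂μ)
        = if q = q' then (∫ ω, Zt ω q.1 q.2 * (starRingEnd ℂ) (Zt ω q.1 q.2) ∂μ) else 0 := by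
    intro q q'
    by_cases h : q = q'
    · subst h; simp
    · rw [if_neg h]
      exact hZuncorr q.1 q.2 q'.1 q'.2 (by simpa [Prod.ext_iff] using h)
  -- compute the left-hand side entry
  have hmain : (∫ ω, (A * Yt ω * V) s t * (starRingEnd ℂ) ((A * Yt ω * V) s t) ∂μ)
      = (∑ p : Fin Nk × Fin Nt,
            (c (Sum.inl p) * (starRingEnd ℂ) (c (Sum.inl p))) * (Omk p.1 p.2 : ℂ))
        + ∑ q : Fin T × Fin Mt,
            (c (Sum.inr q) * (starRingEnd ℂ) (c (Sum.inr q)))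
              * ∫ ω, Zt ω q.1 q.2 * (starRingEnd ℂ) (Zt ω q.1 q.2) ∂μ := by
    simp_rw [hrepr]
    rw [expand_sum_L2 c f hmem]
    simp only [Fintype.sum_sum_type, hfdef, Sum.elim_inl, Sum.elim_inr]
    simp only [hGZ, hZG, mul_zero, Finset.sum_const_zero, add_zero, zero_add]
    congr 1
    · refine Finset.sum_congr rfl fun p _ => ?_
      rw [Finset.sum_eq_single p]
      · rw [hGG]; simp
      · intro p' _ hne
        rw [hGG, if_neg (fun h => hne h.symm), mul_zero]
      · intro h; exact absurd (Finset.mem_univ p) h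
    · refine Finset.sum_congr rfl fun q _ => ?_
      rw [Finset.sum_eq_single q]
      · intro q' _ hne
        have hne' : (q.1, q.2) ≠ (q'.1, q'.2) := by
          simp only [Prod.mk.eta]
          exact fun h => hne h.symm
        rw [hZuncorr _ _ _ _ hne', mul_zero]
      · intro h; exact absurd (Finset.mem_univ q) h
  rw [hmain]
  -- identify the two sums with the entries of the right-hand side matrices
  have hR1 : ((B ⊙ B.map (starRingEnd ℂ)) * Omk.map (fun x => (x : ℂ))
        * (C ⊙ C.map (starRingEnd ℂ))) s t
      = ∑ p : Fin Nk × Fin Nt,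
          (c (Sum.inl p) * (starRingEnd ℂ) (c (Sum.inl p))) * (Omk p.1 p.2 : ℂ) := by
    rw [Fintype.sum_prod_type]
    simp only [Matrix.mul_apply, Matrix.hadamard_apply, Matrix.map_apply, Finset.sum_mul]
    rw [Finset.sum_comm]
    refine Finset.sum_congr rfl fun a _ => Finset.sum_congr rfl fun b _ => ?_
    simp only [hcdef, Sum.elim_inl, _root_.map_mul]
    ring
  have hR2 : ((A ⊙ A.map (starRingEnd ℂ))
        * (Matrix.of fun i j => ∫ ω, Zt ω i j * (starRingEnd ℂ) (Zt ω i j) ∂μ)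
        * (V ⊙ V.map (starRingEnd ℂ))) s t
      = ∑ q : Fin T × Fin Mt,
          (c (Sum.inr q) * (starRingEnd ℂ) (c (Sum.inr q)))
            * ∫ ω, Zt ω q.1 q.2 * (starRingEnd ℂ) (Zt ω q.1 q.2) ∂μ := by
    rw [Fintype.sum_prod_type]
    simp only [Matrix.mul_apply, Matrix.hadamard_apply, Matrix.map_apply, Matrix.of_apply,
      Finset.sum_mul]
    rw [Finset.sum_comm]
    refine Finset.sum_congr rfl fun i _ => Finset.sum_congr rfl fun j _ => ?_
    simp only [hcdef, Sum.elim_inr, _root_.map_mul]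
    ring
  rw [hR1, hR2]
end

section
/- If U ∈ ℂ^{M_k×M_k} and V ∈ ℂ^{M_t×M_t} are unitary, the pilot matrix satisfies X_k X_kᴴ = I, the noise is absent (Z = 0), and Yᵀ = X_kᵀ U G_k Vᴴ where the entries of the random matrix G_k are pairwise uncorrelated with power matrix Ω_k, then E[(Uᴴ X_k^* Yᵀ V) ⊙ conj(Uᴴ X_k^* Yᵀ V)] = Ω_k (cast entrywise into ℂ). -/
open Matrix MeasureTheory
open scoped Matrix

/-- In the conventional beam domain channel model, where `U` and `V` are unitary,
`X_k X_kᴴ = I`, and the noise is absent, `E[(Uᴴ Xₖ^* Yᵀ V) ⊙ (Uᴴ Xₖ^* Yᵀ V)^*] = Ω_k`. -/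
theorem stmt2 {α : Type*} [MeasurableSpace α] (μ : Measure α) [IsProbabilityMeasure μ]
    {T Mk Mt : ℕ}
    (U : Matrix (Fin Mk) (Fin Mk) ℂ) (V : Matrix (Fin Mt) (Fin Mt) ℂ)
    (hU : U ∈ Matrix.unitaryGroup (Fin Mk) ℂ) (hV : V ∈ Matrix.unitaryGroup (Fin Mt) ℂ)
    (Xk : Matrix (Fin Mk) (Fin T) ℂ) (hX : Xk * Xkᴴ = 1)
    (G : α → Matrix (Fin Mk) (Fin Mt) ℂ)
    (hGL2 : ∀ a b, MemLp (fun ω => G ω a b) 2 μ)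
    (Omk : Matrix (Fin Mk) (Fin Mt) ℝ)
    (hG : ∀ s₁ s₂ t₁ t₂, (∫ ω, G ω s₁ s₂ * (starRingEnd ℂ) (G ω t₁ t₂) ∂μ)
      = if s₁ = t₁ ∧ s₂ = t₂ then (Omk s₁ s₂ : ℂ) else 0)
    (Yt : α → Matrix (Fin T) (Fin Mt) ℂ)
    (hY : ∀ ω, Yt ω = Xkᵀ * U * G ω * Vᴴ) :
    (Matrix.of fun s t =>
        ∫ ω, (Uᴴ * Xk.map (starRingEnd ℂ) * Yt ω * V) s t
          * (starRingEnd ℂ) ((Uᴴ * Xk.map (starRingEnd ℂ) * Yt ω * V) s t) ∂μ)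
      = Omk.map (fun x => (x : ℂ)) := by
  have hXX : Xk.map (starRingEnd ℂ) * Xkᵀ = 1 := by
    have h := congrArg Matrix.transpose hX
    rw [Matrix.transpose_mul, Matrix.transpose_one] at h
    have hmap : Xkᴴᵀ = Xk.map (starRingEnd ℂ) := by
      ext i j; simp [Matrix.conjTranspose_apply]
    rwa [hmap] at h
  have hUU : Uᴴ * U = 1 := by
    exact hU.1
  have hVV : Vᴴ * V = 1 := by
    exact hV.1
  have key : ∀ ω, Uᴴ * Xk.map (starRingEnd ℂ) * Yt ω * V = G ω := by
    intro ω
    rw [hY ω]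
    calc Uᴴ * Xk.map (starRingEnd ℂ) * (Xkᵀ * U * G ω * Vᴴ) * V
        = Uᴴ * ((Xk.map (starRingEnd ℂ) * Xkᵀ) * U) * G ω * (Vᴴ * V) := by
          simp only [Matrix.mul_assoc]
      _ = G ω := by
          rw [hXX, hVV, Matrix.one_mul, Matrix.mul_one, hUU, Matrix.one_mul]
  ext s t
  simp only [Matrix.of_apply, Matrix.map_apply]
  rw [show (fun ω => (Uᴴ * Xk.map (starRingEnd ℂ) * Yt ω * V) s t
      * (starRingEnd ℂ) ((Uᴴ * Xk.map (starRingEnd ℂ) * Yt ω * V) s t))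
      = fun ω => G ω s t * (starRingEnd ℂ) (G ω s t) from funext fun ω => by rw [key ω]]
  simpa using hG s t s t
end

section
/- Let Φ ∈ ℝ^{a×b}, T ∈ ℝ^{a×n}, S ∈ ℝ^{m×b}, N' ∈ ℝ^{a×b}, and M ∈ ℝ^{n×m}, and assume every entry of T (M ⊙ M) S + N' is strictly positive. Fix indices (u,v). Then the real function t ↦ Σ_{i,j} Φ_{ij} · log [T ((M + t·E_{uv}) ⊙ (M + t·E_{uv})) S + N']_{ij}, where E_{uv} is the matrix with 1 in position (u,v) and 0 elsewhere, is differentiable at t = 0 with derivative 2·(S Qᵀ T)_{vu}·M_{uv} = 2·[(S Qᵀ T)ᵀ ⊙ M]_{uv}, where Q ∈ ℝ^{a×b} is defined by Q_{ij} = Φ_{ij} / [T (M ⊙ M) S + N']_{ij}. (The paper's gradient convention absorbs the factor 2.) -/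
open Matrix
open scoped Matrix

/-- The directional derivative of `M ↦ ∑_{i,j} Φ_{ij} log [T (M ⊙ M) S + N']_{ij}` in the
direction of the standard basis matrix `E_{uv}` is `2 (S Qᵀ T)_{vu} M_{uv}`, where
`Q_{ij} = Φ_{ij} / [T (M ⊙ M) S + N']_{ij}`, provided all entries of
`T (M ⊙ M) S + N'` are strictly positive. -/
theorem stmt5 {a b n m : ℕ} (Φ : Matrix (Fin a) (Fin b) ℝ)
    (T : Matrix (Fin a) (Fin n) ℝ) (S : Matrix (Fin m) (Fin b) ℝ)
    (N' : Matrix (Fin a) (Fin b) ℝ) (M : Matrix (Fin n) (Fin m) ℝ)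
    (hpos : ∀ i j, 0 < (T * (M ⊙ M) * S + N') i j)
    (u : Fin n) (v : Fin m) :
    HasDerivAt (fun t : ℝ => ∑ i, ∑ j, Φ i j *
        Real.log ((T * ((M + t • Matrix.single u v (1 : ℝ))
            ⊙ (M + t • Matrix.single u v (1 : ℝ))) * S + N') i j))
      (2 * (S * (Matrix.of fun i j => Φ i j / (T * (M ⊙ M) * S + N') i j)ᵀ * T) v u * M u v)
      0 := by
  set E : Matrix (Fin n) (Fin m) ℝ := Matrix.single u v (1 : ℝ) with hE
  -- derivative of each entry
  have hg : ∀ i j, HasDerivAt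
      (fun t : ℝ => (T * ((M + t • E) ⊙ (M + t • E)) * S + N') i j)
      (2 * T i u * M u v * S v j) 0 := by
    intro i j
    have h1 : (fun t : ℝ => (T * ((M + t • E) ⊙ (M + t • E)) * S + N') i j)
        = fun t => (∑ l, ∑ k, T i k *
            ((M k l + t * E k l) * (M k l + t * E k l)) * S l j) + N' i j := by
      funext t
      simp [Matrix.mul_apply, Matrix.add_apply, Matrix.hadamard_apply, Matrix.smul_apply,
        Finset.sum_mul, Finset.mul_sum, mul_assoc]
    rw [h1]
    have h2 : ∀ (l : Fin m) (k : Fin n), HasDerivAt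
        (fun t : ℝ => T i k * ((M k l + t * E k l) * (M k l + t * E k l)) * S l j)
        (T i k * (2 * M k l * E k l) * S l j) 0 := by
      intro l k
      have hb : HasDerivAt (fun t : ℝ => M k l + t * E k l) (E k l) 0 := by
        simpa using ((hasDerivAt_id (0:ℝ)).mul_const (E k l)).const_add (M k l)
      have := (hb.mul hb).const_mul (T i k) |>.mul_const (S l j)
      exact this.congr_deriv (by ring)
    have hsum : HasDerivAt
        (fun t : ℝ => ∑ l, ∑ k, T i k *
            ((M k l + t * E k l) * (M k l + t * E k l)) * S l j)
        (∑ l, ∑ k, T i k * (2 * M k l * E k l) * S l j) 0 :=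
      HasDerivAt.fun_sum (fun l _ => HasDerivAt.fun_sum (fun k _ => h2 l k))
    have hval : (∑ l, ∑ k, T i k * (2 * M k l * E k l) * S l j)
        = 2 * T i u * M u v * S v j := by
      rw [Finset.sum_comm]
      rw [Finset.sum_eq_single u, Finset.sum_eq_single v]
      · simp only [hE, Matrix.single_apply_same]; ring
      · intro l _ hl
        simp [hE, Matrix.single, hl.symm]
      · simp
      · intro k _ hk
        apply Finset.sum_eq_zero
        intro l _
        simp [hE, Matrix.single, hk.symm]
      · simp
    rw [← hval]
    exact hsum.add_const (N' i j)
  have hzero : ∀ i j, (fun t : ℝ => (T * ((M + t • E) ⊙ (M + t • E)) * S + N') i j) 0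
      = (T * (M ⊙ M) * S + N') i j := by
    intro i j; simp
  have hterm : ∀ i j, HasDerivAt
      (fun t : ℝ => Φ i j * Real.log ((T * ((M + t • E) ⊙ (M + t • E)) * S + N') i j))
      (Φ i j * ((2 * T i u * M u v * S v j) / (T * (M ⊙ M) * S + N') i j)) 0 := by
    intro i j
    have hne : (T * ((M + (0:ℝ) • E) ⊙ (M + (0:ℝ) • E)) * S + N') i j ≠ 0 := by
      simpa using (hpos i j).ne'
    have := ((hg i j).log hne).const_mul (Φ i j)
    simpa using this
  have hfinal : HasDerivAt
      (fun t : ℝ => ∑ i, ∑ j, Φ i j *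
          Real.log ((T * ((M + t • E) ⊙ (M + t • E)) * S + N') i j))
      (∑ i, ∑ j, Φ i j * ((2 * T i u * M u v * S v j) / (T * (M ⊙ M) * S + N') i j)) 0 :=
    HasDerivAt.fun_sum (fun i _ => HasDerivAt.fun_sum (fun j _ => hterm i j))
  convert hfinal using 1
  simp only [Matrix.mul_apply, Matrix.transpose_apply, Matrix.of_apply, Finset.sum_mul,
    Finset.mul_sum]
  apply Finset.sum_congr rfl
  intro i _
  apply Finset.sum_congr rfl
  intro j _
  ring
end

section
/- Let Φ ∈ ℝ^{a×b}, T ∈ ℝ^{a×n}, S ∈ ℝ^{m×b}, N' ∈ ℝ^{a×b}, M ∈ ℝ^{n×m}, assume every entry of T (M ⊙ M) S + N' is strictly positive, and define g(M) = −Σ_{i,j} Φ_{ij}·log[T(M⊙M)S + N']_{ij} + Σ_{i,j} [T(M⊙M)S]_{ij}. Then for each fixed (u,v), the function t ↦ g(M + t·E_{uv}) is differentiable at t = 0 with derivative 2·([(S J T)ᵀ ⊙ M]_{uv} − [(S Qᵀ T)ᵀ ⊙ M]_{uv}), where J ∈ ℝ^{b×a} is the all-ones matrix and Q_{ij} = Φ_{ij}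 / [T(M⊙M)S + N']_{ij}. -/
open Matrix
open scoped Matrix

/-- Directional derivative of the objective
`g(M) = −∑_{i,j} Φ_{ij} log [T (M⊙M) S + N']_{ij} + ∑_{i,j} [T (M⊙M) S]_{ij}` in the direction
of the standard basis matrix `E_{uv}`: it equals
`2 ([(S J T)ᵀ ⊙ M]_{uv} − [(S Qᵀ T)ᵀ ⊙ M]_{uv})`, where `J` is the all-ones matrix and
`Q_{ij} = Φ_{ij} / [T (M⊙M) S + N']_{ij}`. -/
theorem stmt6 {a b n m : ℕ} (Φ : Matrix (Fin a) (Fin b) ℝ)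
    (T : Matrix (Fin a) (Fin n) ℝ) (S : Matrix (Fin m) (Fin b) ℝ)
    (N' : Matrix (Fin a) (Fin b) ℝ) (M : Matrix (Fin n) (Fin m) ℝ)
    (hpos : ∀ i j, 0 < (T * (M ⊙ M) * S + N') i j)
    (u : Fin n) (v : Fin m) :
    HasDerivAt (fun t : ℝ =>
        -(∑ i, ∑ j, Φ i j *
          Real.log ((T * ((M + t • Matrix.single u v (1 : ℝ))
              ⊙ (M + t • Matrix.single u v (1 : ℝ))) * S + N') i j))
        + ∑ i, ∑ j, (T * ((M + t • Matrix.single u v (1 : ℝ))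
              ⊙ (M + t • Matrix.single u v (1 : ℝ))) * S) i j)
      (2 * (((S * (Matrix.of fun _ _ => (1 : ℝ) : Matrix (Fin b) (Fin a) ℝ) * T)ᵀ ⊙ M) u v
          - ((S * (Matrix.of fun i j => Φ i j / (T * (M ⊙ M) * S + N') i j)ᵀ * T)ᵀ ⊙ M) u v))
      0 := by
  set E : Matrix (Fin n) (Fin m) ℝ := Matrix.single u v 1 with hE
  -- entry of T * E * S
  have hPentry : ∀ (i : Fin a) (j : Fin b), (T * E * S) i j = T i u * S v j := by
    intro i j
    simp [hE, Matrix.mul_apply, Matrix.single, ite_and, mul_ite, ite_mul, mul_zero,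
      zero_mul, Finset.sum_ite_eq, Finset.sum_ite_eq']
  -- key entrywise expansion
  have key : ∀ (t : ℝ) (i : Fin a) (j : Fin b),
      (T * ((M + t • E) ⊙ (M + t • E)) * S) i j
        = (T * (M ⊙ M) * S) i j + (2 * t * M u v + t ^ 2) * (T i u * S v j) := by
    intro t i j
    have hH : (M + t • E) ⊙ (M + t • E) = M ⊙ M + (2 * t * M u v + t ^ 2) • E := by
      ext k l
      simp only [Matrix.hadamard_apply, Matrix.add_apply, Matrix.smul_apply, smul_eq_mul, hE,
        Matrix.single, Matrix.of_apply]
      split_ifs with h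
      · obtain ⟨rfl, rfl⟩ := h; ring
      · ring
    rw [hH, Matrix.mul_add, Matrix.add_mul, Matrix.add_apply, Matrix.mul_smul, Matrix.smul_mul,
      Matrix.smul_apply, smul_eq_mul, hPentry]
  have hq : HasDerivAt (fun t : ℝ => 2 * t * M u v + t ^ 2) (2 * M u v) 0 := by
    have h1 : HasDerivAt (fun t : ℝ => t) 1 (0:ℝ) := hasDerivAt_id 0
    have h2 := ((h1.const_mul (2:ℝ)).mul_const (M u v)).fun_add (hasDerivAt_pow 2 (0:ℝ))
    simpa using h2
  have hfij : ∀ (i : Fin a) (j : Fin b),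
      HasDerivAt (fun t : ℝ => (T * (M ⊙ M) * S + N') i j
          + (2 * t * M u v + t ^ 2) * (T i u * S v j))
        (2 * M u v * (T i u * S v j)) 0 := by
    intro i j
    simpa using (hq.mul_const (T i u * S v j)).const_add ((T * (M ⊙ M) * S + N') i j)
  have hlog : ∀ (i : Fin a) (j : Fin b),
      HasDerivAt (fun t : ℝ => Φ i j * Real.log ((T * (M ⊙ M) * S + N') i j
          + (2 * t * M u v + t ^ 2) * (T i u * S v j)))
        (Φ i j * (2 * M u v * (T i u * S v j) / (T * (M ⊙ M) * S + N') i j)) 0 := by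
    intro i j
    have hne : (T * (M ⊙ M) * S + N') i j
        + (2 * (0:ℝ) * M u v + (0:ℝ) ^ 2) * (T i u * S v j) ≠ 0 := by
      simpa using (hpos i j).ne'
    have := ((hfij i j).log hne).const_mul (Φ i j)
    simpa using this
  have hmain : HasDerivAt (fun t : ℝ =>
      -(∑ i, ∑ j, Φ i j * Real.log ((T * (M ⊙ M) * S + N') i j
          + (2 * t * M u v + t ^ 2) * (T i u * S v j)))
      + ∑ i, ∑ j, ((T * (M ⊙ M) * S) i j + (2 * t * M u v + t ^ 2) * (T i u * S v j)))
      (-(∑ i, ∑ j, Φ i j * (2 * M u v * (T i u * S v j) / (T * (M ⊙ M) * S + N') i j))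
      + ∑ i, ∑ j, 2 * M u v * (T i u * S v j)) 0 := by
    refine HasDerivAt.add (HasDerivAt.neg ?_) ?_
    · exact HasDerivAt.fun_sum fun i _ => HasDerivAt.fun_sum fun j _ => hlog i j
    · refine HasDerivAt.fun_sum fun i _ => HasDerivAt.fun_sum fun j _ => ?_
      simpa using (hq.mul_const (T i u * S v j)).const_add ((T * (M ⊙ M) * S) i j)
  have hfun : (fun t : ℝ =>
      -(∑ i, ∑ j, Φ i j * Real.log ((T * ((M + t • E) ⊙ (M + t • E)) * S + N') i j))
      + ∑ i, ∑ j, (T * ((M + t • E) ⊙ (M + t • E)) * S) i j)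
      = (fun t : ℝ =>
      -(∑ i, ∑ j, Φ i j * Real.log ((T * (M ⊙ M) * S + N') i j
          + (2 * t * M u v + t ^ 2) * (T i u * S v j)))
      + ∑ i, ∑ j, ((T * (M ⊙ M) * S) i j + (2 * t * M u v + t ^ 2) * (T i u * S v j))) := by
    funext t
    congr 1
    · congr 1
      refine Finset.sum_congr rfl fun i _ => Finset.sum_congr rfl fun j _ => ?_
      have harg : (T * ((M + t • E) ⊙ (M + t • E)) * S + N') i j
          = (T * (M ⊙ M) * S + N') i j + (2 * t * M u v + t ^ 2) * (T i u * S v j) := by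
        simp only [Matrix.add_apply, key t i j]; ring
      rw [harg]
    · exact Finset.sum_congr rfl fun i _ => Finset.sum_congr rfl fun j _ => key t i j
  rw [show (fun t : ℝ =>
        -(∑ i, ∑ j, Φ i j *
          Real.log ((T * ((M + t • Matrix.single u v (1 : ℝ))
              ⊙ (M + t • Matrix.single u v (1 : ℝ))) * S + N') i j))
        + ∑ i, ∑ j, (T * ((M + t • Matrix.single u v (1 : ℝ))
              ⊙ (M + t • Matrix.single u v (1 : ℝ))) * S) i j) = _ from hfun]
  convert hmain using 1
  -- derivative value identity
  simp only [Matrix.hadamard_apply, Matrix.transpose_apply, Matrix.mul_apply, Matrix.of_apply,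
    Matrix.add_apply, neg_add_eq_sub, ← Finset.sum_sub_distrib, Finset.sum_mul, Finset.mul_sum,
    mul_sub, mul_one]
  refine Finset.sum_congr rfl fun i _ => Finset.sum_congr rfl fun j _ => ?_
  ring
end

section
/- Let H ∈ ℂ^{m×n}, let R₀ ∈ ℂ^{m×m} be Hermitian positive definite, let P_l ∈ ℂ^{n×d_l} and P, Δ ∈ ℂ^{n×d}. Define for real t the matrices R(t) = R₀ + H (P + tΔ)(P + tΔ)ᴴ Hᴴ and Ř(t) = R(t) + H P_l P_lᴴ Hᴴ, and the rate function φ(t) = log(det(Ř(t)).re) − log(det(R(t)).re). Then φ is differentiable at t = 0 with derivative φ'(0) = −2·Re tr(Δᴴ Hᴴ (R(0)⁻¹ − Ř(0)⁻¹) H P). (This is the deterministic core of the gradient formula ∂R_l/∂P_k^* = −F_l P_k with F_l = Hᴴ R_l⁻¹ H − Hᴴ Ř_l⁻¹ H for an interfered user's rate.) -/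
open Matrix
open scoped Matrix ComplexOrder

open Finset Equiv in
private lemma stmt14_hasDerivAt_det {k : ℕ} (M : ℝ → Matrix (Fin k) (Fin k) ℂ)
    (A B : Matrix (Fin k) (Fin k) ℂ)
    (hM : ∀ i j, HasDerivAt (fun t => M t i j) (B i j) 0) (h0 : M 0 = A) :
    HasDerivAt (fun t => (M t).det) (Matrix.trace (adjugate A * B)) 0 := by
  have key : HasDerivAt (fun t => (M t).det)
      (∑ σ : Perm (Fin k), ((Perm.sign σ : ℤ) : ℂ) *
        ∑ i, (∏ j ∈ univ.erase i, A (σ j) j) * B (σ i) i) 0 := by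
    simp only [Matrix.det_apply']
    apply HasDerivAt.fun_sum
    intro σ _
    have := HasDerivAt.fun_finsetProd (u := univ) (f := fun i t => M t (σ i) i)
      (f' := fun i => B (σ i) i) (x := 0) (fun i _ => hM (σ i) i)
    simp only [h0, smul_eq_mul] at this
    exact (this.const_mul _)
  convert key using 1
  have h1 : Matrix.trace (adjugate A * B)
      = ∑ i, ((A.updateCol i (fun r => B r i)).det) := by
    simp only [Matrix.trace, Matrix.diag, Matrix.mul_apply, ← Matrix.cramer_apply]
    congr 1; ext i
    rw [cramer_eq_adjugate_mulVec]; rfl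
  have h2 : ∀ i : Fin k, ((A.updateCol i (fun r => B r i)).det)
      = ∑ σ : Perm (Fin k), ((Perm.sign σ : ℤ) : ℂ) *
          ((∏ j ∈ univ.erase i, A (σ j) j) * B (σ i) i) := by
    intro i
    rw [Matrix.det_apply']
    refine Finset.sum_congr rfl fun σ _ => ?_
    congr 1
    rw [← Finset.mul_prod_erase univ _ (Finset.mem_univ i)]
    rw [mul_comm]
    congr 1
    · exact Finset.prod_congr rfl fun j hj =>
        Matrix.updateCol_apply.trans (if_neg (Finset.mem_erase.mp hj).1)
    · exact Matrix.updateCol_apply.trans (if_pos rfl)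
  rw [h1]
  simp only [h2]
  rw [Finset.sum_comm]
  exact Finset.sum_congr rfl fun σ _ => (Finset.mul_sum _ _ _).symm

private lemma stmt14_hasDerivAt_log_det {k : ℕ} (M : ℝ → Matrix (Fin k) (Fin k) ℂ)
    (A B : Matrix (Fin k) (Fin k) ℂ) (hA : A.PosDef)
    (hM : ∀ i j, HasDerivAt (fun t => M t i j) (B i j) 0) (h0 : M 0 = A) :
    HasDerivAt (fun t => Real.log ((M t).det.re)) ((Matrix.trace (A⁻¹ * B)).re) 0 := by
  have hdet := stmt14_hasDerivAt_det M A B hM h0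
  have hre : HasDerivAt (fun t => ((M t).det).re)
      ((Matrix.trace (adjugate A * B)).re) 0 :=
    Complex.reCLM.hasFDerivAt.comp_hasDerivAt 0 hdet
  have hpos : (0 : ℂ) < A.det := hA.det_pos
  have hre0 : 0 < A.det.re := (Complex.lt_def.mp hpos).1
  have him : A.det.im = 0 := ((Complex.lt_def.mp hpos).2).symm
  have hne : (M 0).det.re ≠ 0 := by rw [h0]; exact hre0.ne'
  have hlog := hre.log hne
  rw [h0] at hlog
  convert hlog using 1
  have hadj : adjugate A = A.det • A⁻¹ := by
    rw [Matrix.inv_def, smul_smul, Ring.inverse_eq_inv,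
      mul_inv_cancel₀ hpos.ne', one_smul]
  rw [hadj, smul_mul_assoc, Matrix.trace_smul, smul_eq_mul, Complex.mul_re, him]
  field_simp
  ring

private lemma stmt14_trace_re_helper {m n d : ℕ} (H : Matrix (Fin m) (Fin n) ℂ)
    (P Δ : Matrix (Fin n) (Fin d) ℂ) (G : Matrix (Fin m) (Fin m) ℂ)
    (hG : G.IsHermitian) :
    (Matrix.trace (G⁻¹ * (H*Δ*Pᴴ*Hᴴ + H*P*Δᴴ*Hᴴ))).re
      = 2 * (Matrix.trace (Δᴴ*Hᴴ*G⁻¹*H*P)).re := by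
  rw [mul_add, Matrix.trace_add]
  have e2 : Matrix.trace (G⁻¹ * (H*P*Δᴴ*Hᴴ)) = Matrix.trace (Δᴴ*Hᴴ*G⁻¹*H*P) := by
    rw [show G⁻¹ * (H*P*Δᴴ*Hᴴ) = (G⁻¹*H*P) * (Δᴴ*Hᴴ) by
      simp only [Matrix.mul_assoc]]
    rw [Matrix.trace_mul_comm]
    simp only [Matrix.mul_assoc]
  have e1 : Matrix.trace (G⁻¹ * (H*Δ*Pᴴ*Hᴴ))
      = star (Matrix.trace (Δᴴ*Hᴴ*G⁻¹*H*P)) := by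
    rw [← Matrix.trace_conjTranspose]
    have h2 : (Δᴴ*Hᴴ*G⁻¹*H*P)ᴴ = (Pᴴ*Hᴴ)*(G⁻¹*(H*Δ)) := by
      simp only [conjTranspose_mul, conjTranspose_conjTranspose, hG.inv.eq,
        Matrix.mul_assoc]
    rw [h2, Matrix.trace_mul_comm]
    rw [show H*Δ*Pᴴ*Hᴴ*G⁻¹ = (H*Δ)*(Pᴴ*(Hᴴ*G⁻¹)) by simp only [Matrix.mul_assoc]]
    rw [Matrix.trace_mul_comm (H*Δ)]
    simp only [Matrix.mul_assoc]
  rw [e1, e2]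
  simp only [Complex.add_re, Complex.star_def, Complex.conj_re]
  ring

private lemma stmt14_aux {m n d : ℕ} (H : Matrix (Fin m) (Fin n) ℂ)
    (R₀' : Matrix (Fin m) (Fin m) ℂ) (hR' : R₀'.PosDef)
    (P Δ : Matrix (Fin n) (Fin d) ℂ) :
    HasDerivAt (fun t : ℝ =>
        Real.log ((R₀' + H * (P + (t : ℂ) • Δ) * (P + (t : ℂ) • Δ)ᴴ * Hᴴ).det.re))
      (2 * (Matrix.trace (Δᴴ * Hᴴ * (R₀' + H * P * Pᴴ * Hᴴ)⁻¹ * H * P)).re) 0 := by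
  set A := R₀' + H * P * Pᴴ * Hᴴ with hAdef
  set B := H*Δ*Pᴴ*Hᴴ + H*P*Δᴴ*Hᴴ with hBdef
  set C := H*Δ*Δᴴ*Hᴴ with hCdef
  have hA : A.PosDef := by
    apply hR'.add_posSemidef
    have := posSemidef_self_mul_conjTranspose (H * P)
    simpa [conjTranspose_mul, Matrix.mul_assoc] using this
  have expand : ∀ t : ℝ, R₀' + H * (P + (t:ℂ)•Δ) * (P + (t:ℂ)•Δ)ᴴ * Hᴴ
      = A + (t:ℂ)•B + ((t:ℂ)*(t:ℂ))•C := by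
    intro t
    have hct : (P + (t:ℂ)•Δ)ᴴ = Pᴴ + (t:ℂ)•Δᴴ := by
      rw [conjTranspose_add, conjTranspose_smul]
      congr 1
      simp [Complex.star_def, Complex.conj_ofReal]
    rw [hct, hAdef, hBdef, hCdef]
    simp only [Matrix.mul_add, Matrix.add_mul, Matrix.smul_mul, Matrix.mul_smul, smul_add,
      smul_smul]
    module
  have hofReal : HasDerivAt (fun t:ℝ => (t:ℂ)) 1 0 := by
    simpa using (hasDerivAt_id (0:ℝ)).ofReal_comp
  have hM : ∀ i j, HasDerivAt
      (fun t : ℝ => (R₀' + H * (P + (t:ℂ)•Δ) * (P + (t:ℂ)•Δ)ᴴ * Hᴴ) i j) (B i j) 0 := by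
    intro i j
    have heq : (fun t : ℝ => (R₀' + H * (P + (t:ℂ)•Δ) * (P + (t:ℂ)•Δ)ᴴ * Hᴴ) i j)
        = fun t : ℝ => A i j + (t:ℂ) * B i j + ((t:ℂ)*(t:ℂ)) * C i j := by
      funext t
      rw [expand t]
      simp [Matrix.add_apply, Matrix.smul_apply, smul_eq_mul]
    rw [heq]
    have hd := ((hasDerivAt_const (0:ℝ) (A i j)).add
        (hofReal.mul_const (B i j))).add ((hofReal.mul hofReal).mul_const (C i j))
    refine hd.congr_deriv ?_
    push_cast
    ring
  have h0 : R₀' + H * (P + ((0:ℝ):ℂ)•Δ) * (P + ((0:ℝ):ℂ)•Δ)ᴴ * Hᴴ = A := by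
    rw [expand 0]; push_cast; simp
  have := stmt14_hasDerivAt_log_det
    (fun t : ℝ => R₀' + H * (P + (t:ℂ)•Δ) * (P + (t:ℂ)•Δ)ᴴ * Hᴴ) A B hA hM h0
  rw [stmt14_trace_re_helper H P Δ A hA.isHermitian] at this
  exact this

/-- Derivative of an interfered user's rate along a perturbation of the precoder: with
`R(t) = R₀ + H (P + tΔ)(P + tΔ)ᴴ Hᴴ` and `Ř(t) = R(t) + H Pₗ Pₗᴴ Hᴴ`, the rate
`φ(t) = log det Ř(t) − log det R(t)` is differentiable at `t = 0` with derivative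
`−2 Re tr(Δᴴ Hᴴ (R(0)⁻¹ − Ř(0)⁻¹) H P)`. -/
theorem stmt14 {m n d dl : ℕ} (H : Matrix (Fin m) (Fin n) ℂ)
    (R₀ : Matrix (Fin m) (Fin m) ℂ) (hR : R₀.PosDef)
    (Pl : Matrix (Fin n) (Fin dl) ℂ) (P Δ : Matrix (Fin n) (Fin d) ℂ) :
    HasDerivAt (fun t : ℝ =>
        Real.log ((R₀ + H * (P + (t : ℂ) • Δ) * (P + (t : ℂ) • Δ)ᴴ * Hᴴ
            + H * Pl * Plᴴ * Hᴴ).det.re)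
        - Real.log ((R₀ + H * (P + (t : ℂ) • Δ) * (P + (t : ℂ) • Δ)ᴴ * Hᴴ).det.re))
      (-(2 * (Matrix.trace (Δᴴ * Hᴴ *
          ((R₀ + H * P * Pᴴ * Hᴴ)⁻¹ - (R₀ + H * P * Pᴴ * Hᴴ + H * Pl * Plᴴ * Hᴴ)⁻¹)
          * H * P)).re))
      0 := by
  have hpsd : (H * Pl * Plᴴ * Hᴴ).PosSemidef := by
    have := posSemidef_self_mul_conjTranspose (H * Pl)
    simpa [conjTranspose_mul, Matrix.mul_assoc] using this
  have h1 := stmt14_aux H (R₀ + H * Pl * Plᴴ * Hᴴ) (hR.add_posSemidef hpsd) P Δ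
  have h2 := stmt14_aux H R₀ hR P Δ
  have heq : (fun t : ℝ =>
      Real.log (((R₀ + H * Pl * Plᴴ * Hᴴ) + H * (P + (t : ℂ) • Δ) * (P + (t : ℂ) • Δ)ᴴ * Hᴴ).det.re))
      = (fun t : ℝ =>
      Real.log ((R₀ + H * (P + (t : ℂ) • Δ) * (P + (t : ℂ) • Δ)ᴴ * Hᴴ + H * Pl * Plᴴ * Hᴴ).det.re)) := by
    funext t
    rw [add_right_comm]
  rw [heq] at h1
  have hsub := h1.sub h2
  refine hsub.congr_deriv ?_
  have hG : R₀ + H * Pl * Plᴴ * Hᴴ + H * P * Pᴴ * Hᴴ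
      = R₀ + H * P * Pᴴ * Hᴴ + H * Pl * Plᴴ * Hᴴ := by rw [add_right_comm]
  rw [hG]
  set X := (R₀ + H * P * Pᴴ * Hᴴ)⁻¹
  set Y := (R₀ + H * P * Pᴴ * Hᴴ + H * Pl * Plᴴ * Hᴴ)⁻¹
  have : Δᴴ * Hᴴ * (X - Y) * H * P = Δᴴ * Hᴴ * X * H * P - Δᴴ * Hᴴ * Y * H * P := by
    simp only [Matrix.mul_sub, Matrix.sub_mul]
  rw [this, Matrix.trace_sub, Complex.sub_re]
  ring
end
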